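/- Let u : [0, T_*) → H^1(ℝ^n) with |x|u(t) ∈ L^2, ‖u(t)‖_2 = ‖u_0‖_2 constant, and suppose J(t) := ∫|x|^2|u(t)|^2 satisfies J(t) → 0 as t → T_* with |J'(t)| bounded near T_*. Then there is a constant c_0 > 0 with ‖∇u(t)‖_2 ≥ c_0 ‖u_0‖_2 / √(T_* − t) for t near T_*. -/

import Mathlib

open MeasureTheory


lemma coord_abs_le_norm {n : ℕ} (x : EuclideanSpace ℝ (Fin n)) (i : Fin n) : |x i| ≤ ‖x‖ := by
  rw [EuclideanSpace.norm_eq]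
  have h1 : |x i| ^ 2 ≤ ∑ j, ‖x j‖ ^ 2 := by
    have := Finset.single_le_sum (f := fun j => ‖x j‖ ^ 2)
      (fun j _ => by positivity) (Finset.mem_univ i)
    simpa [Real.norm_eq_abs] using this
  nlinarith [Real.sq_sqrt (show (0:ℝ) ≤ ∑ j, ‖x j‖ ^ 2 by positivity),
    Real.sqrt_nonneg (∑ j, ‖x j‖ ^ 2), abs_nonneg (x i)]

lemma fderiv_normsq_eq {n : ℕ} (F : EuclideanSpace ℝ (Fin n) → ℂ) (hF : Differentiable ℝ F)
    (v : EuclideanSpace ℝ (Fin n)) (x : EuclideanSpace ℝ (Fin n)) :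
    fderiv ℝ (fun y => ‖F y‖ ^ 2) x v =
      2 * ((F x).re * (fderiv ℝ F x v).re + (F x).im * (fderiv ℝ F x v).im) := by
  have heq : (fun y => ‖F y‖ ^ 2) = fun y => (F y).re * (F y).re + (F y).im * (F y).im := by
    funext y
    rw [← Complex.normSq_apply, ← Complex.sq_norm]
  have ha : HasFDerivAt (fun y => (F y).re) (Complex.reCLM.comp (fderiv ℝ F x)) x :=
    Complex.reCLM.hasFDerivAt.comp x (hF x).hasFDerivAt
  have hb : HasFDerivAt (fun y => (F y).im) (Complex.imCLM.comp (fderiv ℝ F x)) x :=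
    Complex.imCLM.hasFDerivAt.comp x (hF x).hasFDerivAt
  have hg := ((ha.mul ha).add (hb.mul hb)).fderiv
  rw [heq, show (fun y => (F y).re * (F y).re + (F y).im * (F y).im) = ((fun y => (F y).re) * (fun y => (F y).re) + (fun y => (F y).im) * (fun y => (F y).im)) from rfl, hg]
  simp [ContinuousLinearMap.add_apply, ContinuousLinearMap.smul_apply,
    ContinuousLinearMap.comp_apply]
  ring

lemma differentiable_normsq {n : ℕ} (F : EuclideanSpace ℝ (Fin n) → ℂ) (hF : Differentiable ℝ F) :
    Differentiable ℝ (fun y => ‖F y‖ ^ 2) := by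
  have heq : (fun y => ‖F y‖ ^ 2) = fun y => (F y).re * (F y).re + (F y).im * (F y).im := by
    funext y
    rw [← Complex.normSq_apply, ← Complex.sq_norm]
  rw [heq]
  have ha : Differentiable ℝ (fun y => (F y).re) := fun x =>
    (Complex.reCLM.hasFDerivAt.comp x (hF x).hasFDerivAt).differentiableAt
  have hb : Differentiable ℝ (fun y => (F y).im) := fun x =>
    (Complex.imCLM.hasFDerivAt.comp x (hF x).hasFDerivAt).differentiableAt
  exact (ha.mul ha).add (hb.mul hb)

lemma abs_fderiv_normsq_le {n : ℕ} (F : EuclideanSpace ℝ (Fin n) → ℂ) (hF : Differentiable ℝ F)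
    (v : EuclideanSpace ℝ (Fin n)) (x : EuclideanSpace ℝ (Fin n)) :
    |fderiv ℝ (fun y => ‖F y‖ ^ 2) x v| ≤ 2 * ‖F x‖ * ‖fderiv ℝ F x v‖ := by
  rw [fderiv_normsq_eq F hF v x]
  set a := (F x).re; set b := (F x).im
  set c := (fderiv ℝ F x v).re; set d := (fderiv ℝ F x v).im
  have h1 : a ^ 2 + b ^ 2 = ‖F x‖ ^ 2 := by
    rw [Complex.sq_norm, Complex.normSq_apply]; ring
  have h2 : c ^ 2 + d ^ 2 = ‖fderiv ℝ F x v‖ ^ 2 := by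
    rw [Complex.sq_norm, Complex.normSq_apply]; ring
  have hp : (0:ℝ) ≤ ‖F x‖ := norm_nonneg _
  have hq : (0:ℝ) ≤ ‖fderiv ℝ F x v‖ := norm_nonneg _
  rw [abs_le]
  constructor <;> nlinarith [sq_nonneg (a*d - b*c), sq_nonneg (a*c + b*d),
    sq_nonneg (a*d + b*c), sq_nonneg (a*c - b*d), mul_nonneg hp hq]

set_option maxHeartbeats 1000000 in
lemma uncertainty {n : ℕ} (F : EuclideanSpace ℝ (Fin n) → ℂ) (hF : Differentiable ℝ F)
    (h1 : Integrable fun x => ‖F x‖ ^ 2)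
    (h2 : Integrable fun x => ∑ i, ‖fderiv ℝ F x (EuclideanSpace.single i 1)‖ ^ 2)
    (h3 : Integrable fun x => ‖x‖ ^ 2 * ‖F x‖ ^ 2) :
    (n : ℝ) * ∫ x, ‖F x‖ ^ 2 ≤
      2 * Real.sqrt (∫ x, ‖x‖ ^ 2 * ‖F x‖ ^ 2) *
        Real.sqrt (∫ x, ∑ i, ‖fderiv ℝ F x (EuclideanSpace.single i 1)‖ ^ 2) := by
  classical
  set g : EuclideanSpace ℝ (Fin n) → ℝ := fun y => ‖F y‖ ^ 2 with hgdef
  have hgdiff : Differentiable ℝ g := differentiable_normsq F hF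
  have hgcont : Continuous g := (hF.continuous.norm.pow 2)
  set Gi : Fin n → EuclideanSpace ℝ (Fin n) → ℂ :=
    fun i x => fderiv ℝ F x (EuclideanSpace.single i 1) with hGidef
  have hGimeas : ∀ i, Measurable (Gi i) := fun i =>
    measurable_fderiv_apply_const ℝ F (EuclideanSpace.single i 1)
  -- integrability of each ‖Gi i‖²
  have hGi2 : ∀ i, Integrable fun x => ‖Gi i x‖ ^ 2 := by
    intro i
    refine h2.mono' ((hGimeas i).norm.pow_const 2).aestronglyMeasurable ?_
    filter_upwards with x
    rw [Real.norm_eq_abs, abs_of_nonneg (by positivity)]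
    exact Finset.single_le_sum (f := fun j => ‖Gi j x‖ ^ 2)
      (fun j _ => by positivity) (Finset.mem_univ i)
  have hIfg' : ∀ i : Fin n, Integrable (fun x : EuclideanSpace ℝ (Fin n) =>
      x i * fderiv ℝ g x (EuclideanSpace.single i 1)) := by
    intro i
    refine (h3.add (hGi2 i)).mono'
      (((EuclideanSpace.proj (𝕜 := ℝ) i).continuous.measurable).mul
        (measurable_fderiv_apply_const ℝ g (EuclideanSpace.single i 1))).aestronglyMeasurable ?_
    filter_upwards with x
    have hd := abs_fderiv_normsq_le F hF (EuclideanSpace.single i 1) x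
    rw [← hgdef] at hd
    have hxi := coord_abs_le_norm x i
    rw [Real.norm_eq_abs, abs_mul]
    simp only [Pi.add_apply]
    have h7 : |x i| * |fderiv ℝ g x (EuclideanSpace.single i 1)|
        ≤ ‖x‖ * (2 * ‖F x‖ * ‖Gi i x‖) :=
      mul_le_mul hxi hd (abs_nonneg _) (norm_nonneg x)
    refine h7.trans ?_
    nlinarith [sq_nonneg (‖x‖ * ‖F x‖ - ‖Gi i x‖), norm_nonneg (Gi i x),
      mul_nonneg (norm_nonneg x) (norm_nonneg (F x))]
  -- the key integration by parts per coordinate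
  have key : ∀ i : Fin n,
      ∫ x, (x i) * fderiv ℝ g x (EuclideanSpace.single i 1) = - ∫ x, g x := by
    intro i
    have hproj : Differentiable ℝ (fun y : EuclideanSpace ℝ (Fin n) => y i) :=
      (EuclideanSpace.proj (𝕜 := ℝ) i).differentiable
    have hfderiv_proj : ∀ x : EuclideanSpace ℝ (Fin n),
        fderiv ℝ (fun y : EuclideanSpace ℝ (Fin n) => y i) x (EuclideanSpace.single i 1) = 1 := by
      intro x
      have : (fun y : EuclideanSpace ℝ (Fin n) => y i)
          = (EuclideanSpace.proj (𝕜 := ℝ) i : _ →L[ℝ] ℝ) := rfl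
      rw [this, ContinuousLinearMap.fderiv]
      simp
    have hf'g : Integrable (fun x =>
        fderiv ℝ (fun y : EuclideanSpace ℝ (Fin n) => y i) x (EuclideanSpace.single i 1) * g x) := by
      simpa [hfderiv_proj] using h1
    have hfg : Integrable (fun x : EuclideanSpace ℝ (Fin n) => x i * g x) := by
      refine (h1.add h3).mono'
        (((EuclideanSpace.proj (𝕜 := ℝ) i).continuous.mul hgcont).aestronglyMeasurable) ?_
      filter_upwards with x
      have h4 : |x i| ≤ 1 + ‖x‖ ^ 2 := by
        nlinarith [coord_abs_le_norm x i, norm_nonneg x, abs_nonneg (x i)]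
      have h5 : (0:ℝ) ≤ g x := by positivity
      rw [Real.norm_eq_abs, abs_mul]
      simp only [Pi.add_apply]
      rw [abs_of_nonneg h5]
      have h6 : g x = ‖F x‖ ^ 2 := rfl
      nlinarith [norm_nonneg x, sq_nonneg (‖F x‖)]
    have hfg' := hIfg' i
    have := integral_mul_fderiv_eq_neg_fderiv_mul_of_integrable
      (f := fun y : EuclideanSpace ℝ (Fin n) => y i) (g := g)
      (v := EuclideanSpace.single i 1) hf'g hfg' hfg (fun x _ => hproj x) (fun x _ => hgdiff x)
    rw [this]
    congr 1
    refine integral_congr_ae (Filter.Eventually.of_forall fun x => ?_)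
    simp only [hfderiv_proj, one_mul]
  -- sum over coordinates and Cauchy-Schwarz
  set S : EuclideanSpace ℝ (Fin n) → ℝ :=
    fun x => ∑ i, x i * fderiv ℝ g x (EuclideanSpace.single i 1) with hSdef
  have hSint : Integrable S := integrable_finset_sum _ (fun i _ => hIfg' i)
  have hSval : ∫ x, S x = -((n : ℝ) * ∫ x, g x) := by
    rw [hSdef]
    rw [integral_finset_sum _ (fun i _ => hIfg' i)]
    simp only [key]
    simp [Finset.sum_const, mul_comm]
  set k : EuclideanSpace ℝ (Fin n) → ℝ := fun x => Real.sqrt (∑ j, ‖Gi j x‖ ^ 2) with hkdef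
  set hh : EuclideanSpace ℝ (Fin n) → ℝ := fun x => ‖x‖ * ‖F x‖ with hhdef
  have hkmeas : Measurable k := by
    apply Measurable.sqrt
    exact Finset.measurable_sum _ (fun j _ => (hGimeas j).norm.pow_const 2)
  have hhcont : Continuous hh := continuous_norm.mul hF.continuous.norm
  have hpt : ∀ x, |S x| ≤ 2 * (hh x * k x) := by
    intro x
    have h8 : |S x| ≤ ∑ i, |x i| * (2 * ‖F x‖ * ‖Gi i x‖) := by
      refine (Finset.abs_sum_le_sum_abs _ _).trans (Finset.sum_le_sum fun i _ => ?_)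
      rw [abs_mul]
      have hd := abs_fderiv_normsq_le F hF (EuclideanSpace.single i 1) x
      rw [← hgdef] at hd
      exact mul_le_mul_of_nonneg_left hd (abs_nonneg _)
    refine h8.trans ?_
    have h9 : ∑ i, |x i| * (2 * ‖F x‖ * ‖Gi i x‖)
        = (2 * ‖F x‖) * ∑ i, |x i| * ‖Gi i x‖ := by
      rw [Finset.mul_sum]; congr 1; funext i; ring
    rw [h9]
    have h10 : ∑ i, |x i| * ‖Gi i x‖
        ≤ Real.sqrt (∑ i, |x i| ^ 2) * Real.sqrt (∑ i, ‖Gi i x‖ ^ 2) :=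
      Real.sum_mul_le_sqrt_mul_sqrt _ _ _
    have h11 : Real.sqrt (∑ i, |x i| ^ 2) = ‖x‖ := by
      rw [EuclideanSpace.norm_eq]
      simp [Real.norm_eq_abs]
    rw [h11] at h10
    calc (2 * ‖F x‖) * ∑ i, |x i| * ‖Gi i x‖
        ≤ (2 * ‖F x‖) * (‖x‖ * k x) := by
          refine mul_le_mul_of_nonneg_left h10 (by positivity)
      _ = 2 * (hh x * k x) := by rw [hhdef]; ring
  have hhk_int : Integrable (fun x => hh x * k x) := by
    refine (h3.add h2).mono' (hhcont.measurable.mul hkmeas).aestronglyMeasurable ?_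
    filter_upwards with x
    simp only [Pi.add_apply]
    have hk0 : 0 ≤ k x := Real.sqrt_nonneg _
    have hh0 : 0 ≤ hh x := by rw [hhdef]; positivity
    have hk2 : k x ^ 2 = ∑ j, ‖Gi j x‖ ^ 2 := Real.sq_sqrt (by positivity)
    have hh2 : hh x ^ 2 = ‖x‖ ^ 2 * ‖F x‖ ^ 2 := by rw [hhdef]; ring
    rw [Real.norm_eq_abs, abs_of_nonneg (mul_nonneg hh0 hk0)]
    nlinarith [sq_nonneg (hh x - k x)]
  have hCS : ∫ x, hh x * k x ≤
      Real.sqrt (∫ x, ‖x‖ ^ 2 * ‖F x‖ ^ 2) *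
        Real.sqrt (∫ x, ∑ i, ‖fderiv ℝ F x (EuclideanSpace.single i 1)‖ ^ 2) := by
    have hconj : Real.HolderConjugate 2 2 := ⟨by norm_num, by norm_num, by norm_num⟩
    have hmh : MemLp hh (ENNReal.ofReal 2) := by
      rw [show ENNReal.ofReal 2 = 2 by norm_num]
      rw [memLp_two_iff_integrable_sq hhcont.aestronglyMeasurable]
      refine h3.congr (Filter.Eventually.of_forall fun x => ?_)
      rw [hhdef]; ring
    have hmk : MemLp k (ENNReal.ofReal 2) := by
      rw [show ENNReal.ofReal 2 = 2 by norm_num]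
      rw [memLp_two_iff_integrable_sq hkmeas.aestronglyMeasurable]
      refine h2.congr (Filter.Eventually.of_forall fun x => ?_)
      rw [hkdef]
      exact (Real.sq_sqrt (by positivity)).symm
    have := integral_mul_le_Lp_mul_Lq_of_nonneg hconj
      (Filter.Eventually.of_forall fun x => by rw [hhdef]; positivity)
      (Filter.Eventually.of_forall fun x => Real.sqrt_nonneg _) hmh hmk
    refine this.trans ?_
    have e1 : ∀ c : ℝ → ℝ, (∀ x, 0 ≤ c x) → ∀ A : ℝ, A = A := fun _ _ _ => rfl
    have hrp : ∀ y : ℝ, y ^ (2:ℝ) = y ^ (2:ℕ) := fun y => by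
      rw [← Real.rpow_natCast y 2]; norm_num
    have h2' : (∫ x, hh x ^ (2:ℝ)) = ∫ x, ‖x‖ ^ 2 * ‖F x‖ ^ 2 := by
      refine integral_congr_ae (Filter.Eventually.of_forall fun x => ?_)
      simp only [hrp, hhdef]; ring
    have h3' : (∫ x, k x ^ (2:ℝ)) = ∫ x, ∑ i, ‖Gi i x‖ ^ 2 := by
      refine integral_congr_ae (Filter.Eventually.of_forall fun x => ?_)
      simp only [hrp, hkdef]
      exact Real.sq_sqrt (by positivity)
    rw [h2', h3']
    rw [← Real.sqrt_eq_rpow, ← Real.sqrt_eq_rpow]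
  have hfinal : (n : ℝ) * ∫ x, g x ≤ ∫ x, |S x| := by
    have : (n : ℝ) * ∫ x, g x = -∫ x, S x := by rw [hSval]; ring
    rw [this]
    have habs : |∫ x, S x| ≤ ∫ x, |S x| := by
      simpa [Real.norm_eq_abs] using norm_integral_le_integral_norm S
    exact (neg_le_abs _).trans habs
  refine hfinal.trans ?_
  have hstep : ∫ x, |S x| ≤ ∫ x, 2 * (hh x * k x) := by
    refine integral_mono hSint.abs (hhk_int.const_mul 2) hpt
  refine hstep.trans ?_
  rw [integral_const_mul]
  have := mul_le_mul_of_nonneg_left hCS (by norm_num : (0:ℝ) ≤ 2)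
  calc 2 * ∫ x, hh x * k x ≤ 2 * (Real.sqrt (∫ x, ‖x‖ ^ 2 * ‖F x‖ ^ 2) *
        Real.sqrt (∫ x, ∑ i, ‖fderiv ℝ F x (EuclideanSpace.single i 1)‖ ^ 2)) := this
    _ = 2 * Real.sqrt (∫ x, ‖x‖ ^ 2 * ‖F x‖ ^ 2) *
        Real.sqrt (∫ x, ∑ i, ‖fderiv ℝ F x (EuclideanSpace.single i 1)‖ ^ 2) := by ring

/-- Lower bound on the blowup rate: if the variance `J(t) = ∫|x|²|u(t)|²` tends to `0`
as `t → T⁻` with `J'` bounded near `T`, and the mass is conserved, then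
`‖∇u(t)‖₂ ≥ c₀ ‖u₀‖₂ / √(T − t)` near `T`. -/
theorem stmt_10 (n : ℕ) (hn : 1 ≤ n) (u : ℝ → EuclideanSpace ℝ (Fin n) → ℂ)
    (T : ℝ) (hT : 0 < T)
    (hdiff : ∀ t ∈ Set.Ico (0 : ℝ) T, Differentiable ℝ (u t))
    (hint1 : ∀ t ∈ Set.Ico (0 : ℝ) T, Integrable fun x => ‖u t x‖ ^ 2)
    (hint2 : ∀ t ∈ Set.Ico (0 : ℝ) T,
      Integrable fun x => ∑ i, ‖fderiv ℝ (u t) x (EuclideanSpace.single i 1)‖ ^ 2)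
    (hint3 : ∀ t ∈ Set.Ico (0 : ℝ) T, Integrable fun x => ‖x‖ ^ 2 * ‖u t x‖ ^ 2)
    (hmass : ∀ t ∈ Set.Ico (0 : ℝ) T, ∫ x, ‖u t x‖ ^ 2 = ∫ x, ‖u 0 x‖ ^ 2)
    (J : ℝ → ℝ) (hJ : ∀ t ∈ Set.Ico (0 : ℝ) T, J t = ∫ x, ‖x‖ ^ 2 * ‖u t x‖ ^ 2)
    (hJ0 : Filter.Tendsto J (nhdsWithin T (Set.Iio T)) (nhds 0))
    (hJ' : ∃ B ε : ℝ, 0 < ε ∧ 0 < B ∧ ∀ t ∈ Set.Ioo (T - ε) T,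
      DifferentiableAt ℝ J t ∧ |deriv J t| ≤ B) :
    ∃ c₀ ε : ℝ, 0 < c₀ ∧ 0 < ε ∧ ∀ t ∈ Set.Ioo (T - ε) T,
      c₀ * Real.sqrt (∫ x, ‖u 0 x‖ ^ 2) / Real.sqrt (T - t) ≤
        Real.sqrt (∫ x, ∑ i, ‖fderiv ℝ (u t) x (EuclideanSpace.single i 1)‖ ^ 2) := by
  obtain ⟨B, ε₀, hε₀, hB, hJd⟩ := hJ'
  set M : ℝ := ∫ x, ‖u 0 x‖ ^ 2 with hMdef
  have hM0 : 0 ≤ M := integral_nonneg fun x => by positivity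
  -- Step A : J t ≤ B * (T - t) on (T - ε₀, T)
  have stepA : ∀ t ∈ Set.Ioo (T - ε₀) T, J t ≤ B * (T - t) := by
    intro t ht
    have hconv : Convex ℝ (Set.Ioo (T - ε₀) T) := convex_Ioo _ _
    have hdiffJ : ∀ x ∈ Set.Ioo (T - ε₀) T, DifferentiableAt ℝ J x := fun x hx => (hJd x hx).1
    have hbound : ∀ x ∈ Set.Ioo (T - ε₀) T, ‖deriv J x‖ ≤ B := fun x hx => by
      rw [Real.norm_eq_abs]; exact (hJd x hx).2
    have hev : ∀ᶠ s in nhdsWithin T (Set.Iio T), J t ≤ J s + B * (T - t) := by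
      have hmem : Set.Ioo t T ∈ nhdsWithin T (Set.Iio T) :=
        Ioo_mem_nhdsLT_of_mem ⟨ht.2, le_refl T⟩
      filter_upwards [hmem] with s hs
      have hsmem : s ∈ Set.Ioo (T - ε₀) T := ⟨lt_trans ht.1 hs.1, hs.2⟩
      have := hconv.norm_image_sub_le_of_norm_deriv_le hdiffJ hbound hsmem ht
      rw [Real.norm_eq_abs, Real.norm_eq_abs] at this
      have h1 : J t - J s ≤ B * |t - s| := (abs_le.mp this).2.trans (le_refl _) |>.trans (le_refl _)
      have h2 : |t - s| ≤ T - t := by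
        rw [abs_of_nonpos (by linarith [hs.1.le])]
        linarith [hs.2.le]
      nlinarith [hB.le]
    have hlim : Filter.Tendsto (fun s => J s + B * (T - t)) (nhdsWithin T (Set.Iio T))
        (nhds (0 + B * (T - t))) := hJ0.add tendsto_const_nhds
    have : J t ≤ 0 + B * (T - t) := ge_of_tendsto hlim hev
    linarith
  by_cases hM : M = 0
  · refine ⟨1, min ε₀ T, one_pos, lt_min hε₀ hT, fun t ht => ?_⟩
    rw [hM]
    simp only [Real.sqrt_zero, mul_zero, zero_div]
    exact Real.sqrt_nonneg _
  · have hMpos : 0 < M := lt_of_le_of_ne hM0 (Ne.symm hM)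
    have hn' : (0:ℝ) < n := by exact_mod_cast Nat.lt_of_lt_of_le Nat.zero_lt_one hn
    refine ⟨n * Real.sqrt M / (2 * Real.sqrt B), min ε₀ T,
      div_pos (mul_pos hn' (Real.sqrt_pos.mpr hMpos)) (by positivity), lt_min hε₀ hT,
      fun t ht => ?_⟩
    have htT : t < T := ht.2
    have h0t : (0:ℝ) ≤ t := by
      have : T - min ε₀ T ≥ 0 := by
        have := min_le_right ε₀ T; linarith
      linarith [ht.1]
    have tmem : t ∈ Set.Ico (0:ℝ) T := ⟨h0t, htT⟩
    have tmem0 : t ∈ Set.Ioo (T - ε₀) T := by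
      refine ⟨lt_of_le_of_lt ?_ ht.1, htT⟩
      have := min_le_left ε₀ T; linarith
    have hJle : J t ≤ B * (T - t) := stepA t tmem0
    set G : ℝ := ∫ x, ∑ i, ‖fderiv ℝ (u t) x (EuclideanSpace.single i 1)‖ ^ 2 with hGdef
    have hG0 : 0 ≤ G := integral_nonneg fun x => Finset.sum_nonneg fun i _ => by positivity
    have hUP := uncertainty (u t) (hdiff t tmem) (hint1 t tmem) (hint2 t tmem) (hint3 t tmem)
    rw [hmass t tmem, ← hJ t tmem, ← hGdef] at hUP
    have hTt : (0:ℝ) < T - t := by linarith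
    have hsqJ : Real.sqrt (J t) ≤ Real.sqrt B * Real.sqrt (T - t) := by
      rw [← Real.sqrt_mul hB.le]
      exact Real.sqrt_le_sqrt hJle
    have hstep : (n:ℝ) * M ≤ 2 * Real.sqrt B * Real.sqrt (T - t) * Real.sqrt G := by
      have h2 : 2 * Real.sqrt (J t) * Real.sqrt G
          ≤ 2 * (Real.sqrt B * Real.sqrt (T - t)) * Real.sqrt G := by
        have := mul_le_mul_of_nonneg_right
          (mul_le_mul_of_nonneg_left hsqJ (by norm_num : (0:ℝ) ≤ 2)) (Real.sqrt_nonneg G)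
        linarith
      calc (n:ℝ) * M ≤ 2 * Real.sqrt (J t) * Real.sqrt G := hUP
        _ ≤ 2 * (Real.sqrt B * Real.sqrt (T - t)) * Real.sqrt G := h2
        _ = 2 * Real.sqrt B * Real.sqrt (T - t) * Real.sqrt G := by ring
    rw [div_le_iff₀ (Real.sqrt_pos.mpr hTt)]
    have hc : (n:ℝ) * Real.sqrt M / (2 * Real.sqrt B) * Real.sqrt M
        = (n:ℝ) * M / (2 * Real.sqrt B) := by
      rw [div_mul_eq_mul_div, mul_assoc, Real.mul_self_sqrt hM0]
    rw [hc, div_le_iff₀ (by positivity : (0:ℝ) < 2 * Real.sqrt B)]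
    nlinarith [hstep]
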